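/- For any sequence of matrices G_1,...,G_T in R^{m×n}, defining M_t = Σ_{s=1}^t G_s G_s^T, it holds that Σ_{t=1}^T tr(G_t^T M_t^{-1/2} G_t) ≤ 2 tr(M_T^{1/2}), where M_t^{-1/2} denotes the Moore-Penrose pseudoinverse square root (or assume each M_t is positive definite). -/

import Mathlib

open Matrix Finset
open scoped Classical

noncomputable def psqrt {m : ℕ} (A : Matrix (Fin m) (Fin m) ℝ) : Matrix (Fin m) (Fin m) ℝ :=
  if h : A.PosSemidef then
    (h.1.eigenvectorUnitary : Matrix (Fin m) (Fin m) ℝ) * diagonal (Real.sqrt ∘ h.1.eigenvalues) *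
      (star h.1.eigenvectorUnitary : Matrix (Fin m) (Fin m) ℝ)
  else 0

noncomputable def Matrix.PosSemidef.sqrt {m : ℕ} {A : Matrix (Fin m) (Fin m) ℝ}
    (h : A.PosSemidef) : Matrix (Fin m) (Fin m) ℝ :=
  (h.1.eigenvectorUnitary : Matrix (Fin m) (Fin m) ℝ) * diagonal (Real.sqrt ∘ h.1.eigenvalues) *
    (star h.1.eigenvectorUnitary : Matrix (Fin m) (Fin m) ℝ)

lemma Matrix.PosSemidef.posSemidef_sqrt {m : ℕ} {A : Matrix (Fin m) (Fin m) ℝ}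
    (h : A.PosSemidef) : h.sqrt.PosSemidef := by
  unfold Matrix.PosSemidef.sqrt
  have hd : (diagonal (Real.sqrt ∘ h.1.eigenvalues)).PosSemidef :=
    posSemidef_diagonal_iff.mpr fun i => Real.sqrt_nonneg _
  have := hd.mul_mul_conjTranspose_same (h.1.eigenvectorUnitary : Matrix (Fin m) (Fin m) ℝ)
  rwa [← star_eq_conjTranspose] at this

lemma Matrix.PosSemidef.sqrt_mul_self {m : ℕ} {A : Matrix (Fin m) (Fin m) ℝ}
    (h : A.PosSemidef) : h.sqrt * h.sqrt = A := by
  unfold Matrix.PosSemidef.sqrt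
  have hU : (star h.1.eigenvectorUnitary : Matrix (Fin m) (Fin m) ℝ) *
      (h.1.eigenvectorUnitary : Matrix (Fin m) (Fin m) ℝ) = 1 := Unitary.coe_star_mul_self _
  have hDD : diagonal (Real.sqrt ∘ h.1.eigenvalues) * diagonal (Real.sqrt ∘ h.1.eigenvalues)
      = diagonal (RCLike.ofReal ∘ h.1.eigenvalues) := by
    rw [diagonal_mul_diagonal]
    congr 1
    funext i
    simp [Real.mul_self_sqrt (h.eigenvalues_nonneg i)]
  have e : (h.1.eigenvectorUnitary : Matrix (Fin m) (Fin m) ℝ) *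
        diagonal (Real.sqrt ∘ h.1.eigenvalues) *
        (star h.1.eigenvectorUnitary : Matrix (Fin m) (Fin m) ℝ) *
      ((h.1.eigenvectorUnitary : Matrix (Fin m) (Fin m) ℝ) *
        diagonal (Real.sqrt ∘ h.1.eigenvalues) *
        (star h.1.eigenvectorUnitary : Matrix (Fin m) (Fin m) ℝ))
      = (h.1.eigenvectorUnitary : Matrix (Fin m) (Fin m) ℝ) *
        (diagonal (Real.sqrt ∘ h.1.eigenvalues) *
        ((star h.1.eigenvectorUnitary : Matrix (Fin m) (Fin m) ℝ) *
        (h.1.eigenvectorUnitary : Matrix (Fin m) (Fin m) ℝ)) *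
        diagonal (Real.sqrt ∘ h.1.eigenvalues)) *
        (star h.1.eigenvectorUnitary : Matrix (Fin m) (Fin m) ℝ) := by
    simp only [Matrix.mul_assoc]
  rw [e, hU, Matrix.mul_one, hDD]
  conv_rhs => rw [h.1.spectral_theorem]
  rw [Unitary.conjStarAlgAut_apply]

lemma psqrt_eq {m : ℕ} {A : Matrix (Fin m) (Fin m) ℝ} (h : A.PosSemidef) :
    psqrt A = h.sqrt := dif_pos h

lemma trace_mul_transpose_nonneg {m : ℕ} (D : Matrix (Fin m) (Fin m) ℝ) :
    0 ≤ (D * Dᵀ).trace := by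
  simp only [Matrix.trace, Matrix.diag, Matrix.mul_apply, Matrix.transpose_apply]
  exact Finset.sum_nonneg fun i _ => Finset.sum_nonneg fun j _ => mul_self_nonneg _

lemma herm_transpose {m : ℕ} {A : Matrix (Fin m) (Fin m) ℝ} (h : A.IsHermitian) :
    Aᵀ = A := by
  rw [← Matrix.conjTranspose_eq_transpose_of_trivial]; exact h

lemma trace_nonneg_psd {m : ℕ} {A : Matrix (Fin m) (Fin m) ℝ} (hA : A.PosSemidef) :
    0 ≤ A.trace := by
  have h := trace_mul_transpose_nonneg hA.sqrt
  rwa [herm_transpose hA.posSemidef_sqrt.isHermitian, hA.sqrt_mul_self] at h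

lemma posDef_sqrt {m : ℕ} {B : Matrix (Fin m) (Fin m) ℝ} (hB : B.PosDef) :
    (hB.posSemidef.sqrt).PosDef := by
  refine .of_dotProduct_mulVec_pos hB.posSemidef.posSemidef_sqrt.isHermitian fun x hx => ?_
  rcases lt_or_eq_of_le (hB.posSemidef.posSemidef_sqrt.dotProduct_mulVec_nonneg x) with h | h
  · exact h
  · exfalso
    have hS0 : hB.posSemidef.sqrt *ᵥ x = 0 :=
      (hB.posSemidef.posSemidef_sqrt.dotProduct_mulVec_zero_iff x).mp h.symm
    have hB0 : B *ᵥ x = 0 := by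
      rw [← hB.posSemidef.sqrt_mul_self, ← Matrix.mulVec_mulVec, hS0, Matrix.mulVec_zero]
    have := hB.dotProduct_mulVec_pos hx
    rw [hB0, dotProduct_zero] at this
    exact lt_irrefl 0 this

/-- Key inequality: tr(B^{-1/2}(B-A)) ≤ 2 tr B^{1/2} - 2 tr A^{1/2}. -/
lemma key_ineq {m : ℕ} {A B : Matrix (Fin m) (Fin m) ℝ} (hA : A.PosSemidef) (hB : B.PosDef) :
    ((psqrt B)⁻¹ * (B - A)).trace ≤ 2 * (psqrt B).trace - 2 * (psqrt A).trace := by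
  rw [psqrt_eq hB.posSemidef, psqrt_eq hA]
  set S := hB.posSemidef.sqrt with hSdef
  have hS : S.PosDef := posDef_sqrt hB
  set Q := hS.posSemidef.sqrt with hQdef
  have hQ : Q.PosDef := posDef_sqrt hS
  set C := hA.sqrt with hCdef
  have hQQ : Q * Q = S := hS.posSemidef.sqrt_mul_self
  have hCC : C * C = A := hA.sqrt_mul_self
  have hSS : S * S = B := hB.posSemidef.sqrt_mul_self
  have hQsymm : Qᵀ = Q := herm_transpose hS.posSemidef.posSemidef_sqrt.isHermitian
  have hCsymm : Cᵀ = C := herm_transpose hA.posSemidef_sqrt.isHermitian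
  have hQdet : IsUnit Q.det := (Matrix.isUnit_iff_isUnit_det Q).mp hQ.isUnit
  have hSdet : IsUnit S.det := (Matrix.isUnit_iff_isUnit_det S).mp hS.isUnit
  have hQinv : Q * Q⁻¹ = 1 := Matrix.mul_nonsing_inv Q hQdet
  have hQinv' : Q⁻¹ * Q = 1 := Matrix.nonsing_inv_mul Q hQdet
  have hSinvS : S⁻¹ * S = 1 := Matrix.nonsing_inv_mul S hSdet
  have hSinv : S⁻¹ = Q⁻¹ * Q⁻¹ := by rw [← hQQ, Matrix.mul_inv_rev]
  have hQinvT : (Q⁻¹)ᵀ = Q⁻¹ := by rw [Matrix.transpose_nonsing_inv, hQsymm]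
  -- expand the square
  have hexp : 0 ≤ ((Q⁻¹ * C - Q) * (Q⁻¹ * C - Q)ᵀ).trace := trace_mul_transpose_nonneg _
  rw [Matrix.transpose_sub, Matrix.transpose_mul, hCsymm, hQinvT, hQsymm] at hexp
  have expand : (Q⁻¹ * C - Q) * (C * Q⁻¹ - Q)
      = (Q⁻¹ * C) * (C * Q⁻¹) - (Q⁻¹ * C) * Q - (Q * (C * Q⁻¹) - Q * Q) := by
    noncomm_ring
  rw [expand, Matrix.trace_sub, Matrix.trace_sub, Matrix.trace_sub] at hexp
  have e1 : ((Q⁻¹ * C) * (C * Q⁻¹)).trace = (S⁻¹ * A).trace := by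
    have h1 : (Q⁻¹ * C) * (C * Q⁻¹) = Q⁻¹ * (A * Q⁻¹) := by
      rw [← hCC]; noncomm_ring
    rw [h1, Matrix.trace_mul_comm, Matrix.mul_assoc, ← hSinv, Matrix.trace_mul_comm]
  have e2 : ((Q⁻¹ * C) * Q).trace = C.trace := by
    rw [Matrix.trace_mul_comm, ← Matrix.mul_assoc, hQinv, Matrix.one_mul]
  have e3 : (Q * (C * Q⁻¹)).trace = C.trace := by
    rw [Matrix.trace_mul_comm, Matrix.mul_assoc, hQinv', Matrix.mul_one]
  have e4 : (Q * Q).trace = S.trace := by rw [hQQ]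
  rw [e1, e2, e3, e4] at hexp
  -- conclude
  have hSB : S⁻¹ * B = S := by rw [← hSS, ← Matrix.mul_assoc, hSinvS, Matrix.one_mul]
  rw [Matrix.mul_sub, Matrix.trace_sub, hSB]
  linarith

lemma psd_sum_ggt {m n : ℕ} (G : ℕ → Matrix (Fin m) (Fin n) ℝ) (s : Finset ℕ) :
    (∑ t ∈ s, G t * (G t)ᵀ).PosSemidef := by
  have hterm : ∀ t : ℕ, (G t * (G t)ᵀ).PosSemidef := by
    intro t
    have := Matrix.posSemidef_self_mul_conjTranspose (G t)
    rwa [Matrix.conjTranspose_eq_transpose_of_trivial] at this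
  induction s using Finset.induction with
  | empty => simpa using Matrix.PosSemidef.zero
  | insert _ _ h ih =>
    rw [Finset.sum_insert h]
    exact (hterm _).add ih

/-- trace potential lemma: for matrices `G 1, …, G T` with
`M t = ∑_{s=1}^t G s * (G s)ᵀ` positive definite, one has
`∑_{t=1}^T tr((G t)ᵀ (M t)^{-1/2} (G t)) ≤ 2 tr((M T)^{1/2})`. -/
theorem stmt0 {m n T : ℕ} (G : ℕ → Matrix (Fin m) (Fin n) ℝ)
    (M : ℕ → Matrix (Fin m) (Fin m) ℝ)
    (hM : ∀ t, M t = ∑ s ∈ Finset.Icc 1 t, G s * (G s)ᵀ)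
    (hpd : ∀ t, 1 ≤ t → t ≤ T → (M t).PosDef) :
    ∑ t ∈ Finset.Icc 1 T, ((G t)ᵀ * (psqrt (M t))⁻¹ * G t).trace
      ≤ 2 * (psqrt (M T)).trace := by
  have hMpsd : ∀ t, (M t).PosSemidef := fun t => by rw [hM t]; exact psd_sum_ggt G _
  induction T with
  | zero =>
    simp only [Finset.Icc_eq_empty_of_lt Nat.zero_lt_one, Finset.sum_empty]
    rw [psqrt_eq (hMpsd 0)]
    have := trace_nonneg_psd (hMpsd 0).posSemidef_sqrt
    linarith
  | succ T ih =>
    have hstep : ∀ t, 1 ≤ t → t ≤ T → (M t).PosDef :=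
      fun t h1 h2 => hpd t h1 (h2.trans (Nat.le_succ T))
    have IH := ih hstep
    rw [Finset.sum_Icc_succ_top (Nat.succ_le_succ (Nat.zero_le T))]
    have hBpd : (M (T + 1)).PosDef := hpd (T + 1) (Nat.succ_le_succ (Nat.zero_le T)) le_rfl
    have hdiff : M (T + 1) - M T = G (T + 1) * (G (T + 1))ᵀ := by
      rw [hM (T + 1), hM T, Finset.sum_Icc_succ_top (Nat.succ_le_succ (Nat.zero_le T)),
        add_sub_cancel_left]
    have hterm : ((G (T + 1))ᵀ * (psqrt (M (T + 1)))⁻¹ * G (T + 1)).trace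
        = ((psqrt (M (T + 1)))⁻¹ * (M (T + 1) - M T)).trace := by
      rw [hdiff, Matrix.trace_mul_comm ((G (T + 1))ᵀ * (psqrt (M (T + 1)))⁻¹) (G (T + 1)),
        ← Matrix.mul_assoc, Matrix.trace_mul_comm]
    have hkey := key_ineq (hMpsd T) hBpd
    rw [hterm]
    linarith
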